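/- For every d ≥ 1 and L ≥ 1 there exist m₀, t₀ ∈ ℕ such that for every η > 0 there exist ε > 0 and N₀ with the following property for all N ≥ N₀. Let ν : ZMod N → ℝ be nonnegative and satisfy the (m₀,t₀,L,ε)-linear forms condition, let {ν_I} be an independent weight system on (ZMod N)^{d+1} built from ν with coefficient bound L, and let J ⊆ {1,…,d+1} with |J| = d. Then ‖ν_J − 1‖_{□,ν} ≤ η, where the weighted box norm on functions (ZMod N)^J → ℝ is the one determined by the weights ν_I, I ⊊ J. -/

import Mathlib

noncomputable section
open Finset

/-- `P_ω(x,y)`: the point whose `i`-th coordinate is `x i` if `ω i = false` and `y i` otherwise. -/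
def proj {ι : Type*} {N : ℕ} (ω : ι → Bool) (x y : ι → ZMod N) : ι → ZMod N :=
  fun i => if ω i then y i else x i

/-- `P_{ω_I}(x_I, y_I)` as a function on the subtype `↥I`. -/
def projI {ι : Type*} {N : ℕ} {I : Finset ι} (ω : I → Bool) (x y : ι → ZMod N) :
    I → ZMod N :=
  fun i => if ω i then y i.1 else x i.1

/-- The product of the weights `ν_I(P_{ω_I}(x_I,y_I))` over proper subsets `I ⊊ ι`
and all `ω_I ∈ {0,1}^I`. -/
def weightProd {ι : Type*} [Fintype ι] [DecidableEq ι] {N : ℕ}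
    (ν : (I : Finset ι) → (I → ZMod N) → ℝ) (x y : ι → ZMod N) : ℝ :=
  ∏ I ∈ univ.filter (fun I : Finset ι => I ≠ univ), ∏ ω : I → Bool, ν I (projI ω x y)

/-- The weighted Gowers inner product `⟨(f_ω)⟩_{□,ν}`. -/
def gowersInner {ι : Type*} [Fintype ι] [DecidableEq ι] {N : ℕ} [NeZero N]
    (ν : (I : Finset ι) → (I → ZMod N) → ℝ)
    (f : (ι → Bool) → (ι → ZMod N) → ℝ) : ℝ :=
  Finset.expect Finset.univ fun x : ι → ZMod N =>
    Finset.expect Finset.univ fun y : ι → ZMod N =>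
      (∏ ω : ι → Bool, f ω (proj ω x y)) * weightProd ν x y

/-- The weighted box norm `‖f‖_{□,ν}`. -/
def boxNorm {ι : Type*} [Fintype ι] [DecidableEq ι] {N : ℕ} [NeZero N]
    (ν : (I : Finset ι) → (I → ZMod N) → ℝ) (f : (ι → ZMod N) → ℝ) : ℝ :=
  gowersInner ν (fun _ => f) ^ (((2 : ℝ) ^ (Fintype.card ι))⁻¹)


/-- The `(m₀,t₀,L,ε)`-linear forms condition for `ν : ZMod N → ℝ`. -/
def LinearFormsCondition (N : ℕ) [NeZero N] (ν : ZMod N → ℝ) (m₀ t₀ L : ℕ) (ε : ℝ) : Prop :=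
  ∀ m t : ℕ, 1 ≤ m → m ≤ m₀ → 1 ≤ t → t ≤ t₀ →
    ∀ (a : Fin m → Fin t → ℤ) (b : Fin m → ZMod N),
      (∀ i, a i ≠ 0) →
      (∀ i j, |a i j| ≤ (L : ℤ)) →
      (∀ i i', i ≠ i' → ¬ ∃ q : ℚ, ∀ j, (a i j : ℚ) = q * (a i' j : ℚ)) →
      |Finset.expect Finset.univ (fun x : Fin t → ZMod N =>
        ∏ i, ν ((∑ j, (a i j : ZMod N) * x j) + b i)) - 1| ≤ ε

/-- Extend a coefficient vector on `I` by zero to all of `Fin n`. -/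
def extCoeff {n : ℕ} (I : Finset (Fin n)) (c : I → ℤ) : Fin n → ℤ :=
  fun i => if h : i ∈ I then c ⟨i, h⟩ else 0

/-- An independent weight system on `(ZMod N)^{d+1}` built from `ν` with coefficient bound `L`:
for each `I` with `|I| ≤ d`, `ν_I` is a (possibly empty, hence identically `1`) product
`∏_j ν(L_I^j(x_I))` of `ν` evaluated at affine-linear forms whose integer coefficients are
nonzero in every coordinate of `I` and bounded by `L`, and any two distinct forms occurring in
the system have linear parts that are non-proportional over `ℚ`. -/
def IsIndepWeightSystem {N : ℕ} [NeZero N] (d L : ℕ) (ν : ZMod N → ℝ)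
    (νI : (I : Finset (Fin (d + 1))) → (I → ZMod N) → ℝ) : Prop :=
  ∃ (K : Finset (Fin (d + 1)) → ℕ)
    (c : (I : Finset (Fin (d + 1))) → ℕ → (I → ℤ))
    (b : Finset (Fin (d + 1)) → ℕ → ZMod N),
    (∀ I : Finset (Fin (d + 1)), I.card ≤ d →
      νI I = fun x => ∏ j ∈ Finset.range (K I),
        ν ((∑ i : I, (c I j i : ZMod N) * x i) + b I j)) ∧
    (∀ I : Finset (Fin (d + 1)), I.card ≤ d → ∀ j < K I, ∀ i : I,
      c I j i ≠ 0 ∧ |c I j i| ≤ (L : ℤ)) ∧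
    (∀ I I' : Finset (Fin (d + 1)), I.card ≤ d → I'.card ≤ d →
      ∀ j < K I, ∀ j' < K I', (I, j) ≠ (I', j') →
      ¬ ∃ q : ℚ, ∀ i : Fin (d + 1),
        (extCoeff I (c I j) i : ℚ) = q * (extCoeff I' (c I' j') i : ℚ))

/-- Restrict a weight system indexed by subsets of `Fin n` to a weight system indexed by
subsets of `↥J`, for `J : Finset (Fin n)`. -/
def restrictWeights {n N : ℕ}
    (νI : (I : Finset (Fin n)) → (I → ZMod N) → ℝ) (J : Finset (Fin n)) :
    (I : Finset J) → (I → ZMod N) → ℝ :=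
  fun I x => νI (I.map (Function.Embedding.subtype _))
    (fun j => x ⟨⟨j.1, Finset.property_of_mem_map_subtype I j.2⟩, by
      obtain ⟨a, ha, hav⟩ := Finset.mem_map.mp j.2
      have : a = ⟨j.1, Finset.property_of_mem_map_subtype I j.2⟩ :=
        Subtype.ext (by simpa using hav)
      exact this ▸ ha⟩)

/-- The multilinear form `Λ(f^{(1)},…,f^{(d+1)})`. -/
def LambdaForm {d N : ℕ} [NeZero N]
    (νI : (I : Finset (Fin (d + 1))) → (I → ZMod N) → ℝ)
    (f : (i : Fin (d + 1)) → (↥(univ.erase i) → ZMod N) → ℝ) : ℝ :=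
  Finset.expect Finset.univ fun x : Fin (d + 1) → ZMod N =>
    (∏ i : Fin (d + 1), f i (fun j => x j.1)) *
      ∏ I ∈ univ.filter (fun I : Finset (Fin (d + 1)) => I.card < d), νI I (fun j => x j.1)

namespace GTaux

lemma sum_sign_compl {α : Type*} [Fintype α] [DecidableEq α] [Nonempty α] :
    ∑ S : Finset α, (-1 : ℝ) ^ (Sᶜ.card) = 0 := by
  have h1 : ∑ S : Finset α, (-1 : ℝ) ^ (Sᶜ.card) = ∑ S : Finset α, (-1 : ℝ) ^ S.card :=
    Fintype.sum_equiv ⟨compl, compl, compl_compl, compl_compl⟩ _ _ (fun S => rfl)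
  rw [h1, ← Finset.powerset_univ]
  have h2 := Finset.sum_powerset_neg_one_pow_card_of_nonempty (Finset.univ_nonempty (α := α))
  exact_mod_cast h2

lemma rpow_aux {g η : ℝ} {k : ℕ} (hη : 0 ≤ η) (h : |g| ≤ η ^ (2^k)) :
    g ^ (((2:ℝ) ^ k)⁻¹) ≤ η := by
  have hy : (0:ℝ) < ((2:ℝ) ^ k)⁻¹ := by positivity
  calc g ^ (((2:ℝ) ^ k)⁻¹) ≤ |g ^ (((2:ℝ) ^ k)⁻¹)| := le_abs_self _
    _ ≤ |g| ^ (((2:ℝ) ^ k)⁻¹) := Real.abs_rpow_le_abs_rpow _ _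
    _ ≤ (η ^ (2^k : ℕ)) ^ (((2:ℝ) ^ k)⁻¹) := Real.rpow_le_rpow (abs_nonneg _) h hy.le
    _ = η := by
        rw [← Real.rpow_natCast η (2^k), ← Real.rpow_mul hη]
        push_cast
        rw [mul_inv_cancel₀ (by positivity), Real.rpow_one]

variable {n : ℕ} (J : Finset (Fin n))

def mapJ (I : Finset ↥J) : Finset (Fin n) := I.map (Function.Embedding.subtype _)

lemma mem_mapJ (I : Finset ↥J) (i : ↥J) : i.1 ∈ mapJ J I ↔ i ∈ I := by
  simp [mapJ]

lemma mapJ_univ : mapJ J univ = J := by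
  simp [mapJ, Finset.univ_eq_attach, Finset.attach_map_val]

def extB (I : Finset ↥J) (ω : ↥I → Bool) (i : ↥J) : Bool :=
  if h : i ∈ I then ω ⟨i, h⟩ else false

def Acoef (c : (I : Finset (Fin n)) → ℕ → (↥I → ℤ))
    (I₀ : Finset ↥J) (ω : ↥J → Bool) (j : ℕ) (p : ↥J × Bool) : ℤ :=
  if ω p.1 = p.2 then extCoeff (mapJ J I₀) (c (mapJ J I₀) j) p.1.1 else 0

lemma Acoef_mem (c : (I : Finset (Fin n)) → ℕ → (↥I → ℤ)) (I₀ : Finset ↥J)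
    (ω : ↥J → Bool) (j : ℕ) (i : ↥J) (hi : i ∈ I₀) :
    Acoef J c I₀ ω j (i, ω i) = c (mapJ J I₀) j ⟨i.1, (mem_mapJ J I₀ i).2 hi⟩ := by
  rw [Acoef, if_pos rfl, extCoeff, dif_pos ((mem_mapJ J I₀ i).2 hi)]

lemma Acoef_nonzero (c : (I : Finset (Fin n)) → ℕ → (↥I → ℤ)) (I₀ : Finset ↥J)
    (ω : ↥J → Bool) (j : ℕ) (p : ↥J × Bool) (h : Acoef J c I₀ ω j p ≠ 0) :
    p.1 ∈ I₀ ∧ ω p.1 = p.2 := by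
  rw [Acoef] at h
  by_cases hβ : ω p.1 = p.2
  · rw [if_pos hβ] at h
    refine ⟨?_, hβ⟩
    rw [extCoeff] at h
    by_cases him : p.1.1 ∈ mapJ J I₀
    · exact (mem_mapJ J I₀ p.1).1 him
    · rw [dif_neg him] at h; exact absurd rfl h
  · rw [if_neg hβ] at h; exact absurd rfl h

lemma sumA {N : ℕ} (c : (I : Finset (Fin n)) → ℕ → (↥I → ℤ))
    (I₀ : Finset ↥J) (ω : ↥J → Bool) (j : ℕ) (x y : ↥J → ZMod N) :
    ∑ p : ↥J × Bool, (Acoef J c I₀ ω j p : ZMod N) * (if p.2 then y p.1 else x p.1)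
      = ∑ i ∈ I₀, (extCoeff (mapJ J I₀) (c (mapJ J I₀) j) i.1 : ZMod N) *
          (if ω i then y i else x i) := by
  classical
  rw [Fintype.sum_prod_type]
  have h1 : ∀ i : ↥J, ∑ β : Bool, (Acoef J c I₀ ω j (i, β) : ZMod N) *
      (if β then y i else x i)
      = (extCoeff (mapJ J I₀) (c (mapJ J I₀) j) i.1 : ZMod N) * (if ω i then y i else x i) := by
    intro i
    rw [Fintype.sum_bool]
    cases h : ω i <;> simp [Acoef, h]
  rw [Fintype.sum_congr _ _ h1]
  exact (Finset.sum_subset (Finset.subset_univ I₀) (fun i _ hi => by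
    rw [extCoeff, dif_neg (fun hmem => hi ((mem_mapJ J I₀ i).1 hmem)), Int.cast_zero,
      zero_mul])).symm

def DSet (I : Finset ↥J) : Finset (↥J → Bool) :=
  univ.filter (fun ω => ∀ i, i ∉ I → ω i = false)

def ASet (S : Finset (↥J → Bool)) : Finset (Finset ↥J × (↥J → Bool)) :=
  ({univ} ×ˢ S) ∪ (univ.filter (fun I : Finset ↥J => I ≠ univ)).biUnion
    (fun I => (DSet J I).image (fun ω => (I, ω)))

def FSet (K : Finset (Fin n) → ℕ) (S : Finset (↥J → Bool)) :
    Finset ((Finset ↥J × (↥J → Bool)) × ℕ) :=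
  (ASet J S).biUnion (fun p => (Finset.range (K (mapJ J p.1))).image (fun j => (p, j)))

lemma mem_FSet (K : Finset (Fin n) → ℕ) (S : Finset (↥J → Bool))
    (f : (Finset ↥J × (↥J → Bool)) × ℕ) :
    f ∈ FSet J K S ↔ f.1 ∈ ASet J S ∧ f.2 ∈ Finset.range (K (mapJ J f.1.1)) := by
  constructor
  · rw [FSet, Finset.mem_biUnion]
    rintro ⟨p, hp, hf⟩
    rw [Finset.mem_image] at hf
    obtain ⟨j, hj, rfl⟩ := hf
    exact ⟨hp, hj⟩
  · rintro ⟨h1, h2⟩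
    rw [FSet, Finset.mem_biUnion]
    exact ⟨f.1, h1, Finset.mem_image.2 ⟨f.2, h2, rfl⟩⟩

lemma mem_ASet (S : Finset (↥J → Bool)) (p : Finset ↥J × (↥J → Bool)) :
    p ∈ ASet J S ↔ (p.1 = univ ∧ p.2 ∈ S) ∨
      (p.1 ≠ univ ∧ ∀ i, i ∉ p.1 → p.2 i = false) := by
  rw [ASet, Finset.mem_union, Finset.mem_product, Finset.mem_biUnion]
  constructor
  · rintro (⟨h1, h2⟩ | ⟨I, hI, hmem⟩)
    · exact Or.inl ⟨by simpa using h1, h2⟩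
    · rw [Finset.mem_image] at hmem
      obtain ⟨ω, hω, rfl⟩ := hmem
      rw [Finset.mem_filter] at hI
      rw [DSet, Finset.mem_filter] at hω
      exact Or.inr ⟨hI.2, hω.2⟩
  · rintro (⟨h1, h2⟩ | ⟨h1, h2⟩)
    · exact Or.inl ⟨by simpa using h1, h2⟩
    · refine Or.inr ⟨p.1, Finset.mem_filter.2 ⟨Finset.mem_univ _, h1⟩, ?_⟩
      refine Finset.mem_image.2 ⟨p.2, ?_, rfl⟩
      rw [DSet, Finset.mem_filter]
      exact ⟨Finset.mem_univ _, h2⟩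

lemma prod_FSet (K : Finset (Fin n) → ℕ) (S : Finset (↥J → Bool))
    (h : (Finset ↥J × (↥J → Bool)) → ℕ → ℝ) :
    ∏ f ∈ FSet J K S, h f.1 f.2 =
      (∏ ω ∈ S, ∏ j ∈ Finset.range (K J), h (univ, ω) j) *
      ∏ I ∈ univ.filter (fun I : Finset ↥J => I ≠ univ), ∏ ω₀ : ↥I → Bool,
        ∏ j ∈ Finset.range (K (mapJ J I)), h (I, extB J I ω₀) j := by
  classical
  rw [FSet, Finset.prod_biUnion]
  swap
  · intro p _ q _ hpq
    simp only [Finset.disjoint_left, Finset.mem_image]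
    rintro a ⟨j, _, rfl⟩ ⟨j', _, h'⟩
    exact hpq (congrArg Prod.fst h').symm
  have hstep : ∀ p ∈ ASet J S,
      ∏ f ∈ (Finset.range (K (mapJ J p.1))).image (fun j => (p, j)), h f.1 f.2
      = ∏ j ∈ Finset.range (K (mapJ J p.1)), h p j := by
    intro p _
    rw [Finset.prod_image (by intro a _ b _ hab; exact (Prod.ext_iff.1 hab).2)]
  rw [Finset.prod_congr rfl hstep, ASet, Finset.prod_union]
  swap
  · simp only [Finset.disjoint_left, Finset.mem_product, Finset.mem_singleton,
      Finset.mem_biUnion, Finset.mem_filter, Finset.mem_image]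
    rintro p ⟨hp1, _⟩ ⟨I, ⟨_, hI⟩, ω, _, h'⟩
    exact hI (by rw [show I = p.1 from congrArg Prod.fst h', hp1])
  congr 1
  · rw [Finset.prod_product, Finset.prod_singleton]
    exact Finset.prod_congr rfl fun ω _ => by rw [mapJ_univ]
  · rw [Finset.prod_biUnion]
    swap
    · intro p _ q _ hpq
      simp only [Finset.disjoint_left, Finset.mem_image]
      rintro a ⟨ω, _, rfl⟩ ⟨ω', _, h'⟩
      exact hpq (congrArg Prod.fst h').symm
    refine Finset.prod_congr rfl fun I _ => ?_
    rw [Finset.prod_image (by intro a _ b _ hab; exact (Prod.ext_iff.1 hab).2)]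
    refine (Finset.prod_nbij' (fun (ω₀ : ↥I → Bool) => extB J I ω₀)
      (fun (ω : ↥J → Bool) (i : ↥I) => ω i.1) ?_ ?_ ?_ ?_ ?_).symm
    · intro ω₀ _
      rw [DSet, Finset.mem_filter]
      exact ⟨Finset.mem_univ _, fun i hi => dif_neg hi⟩
    · intro ω _; exact Finset.mem_univ _
    · intro ω₀ _
      funext i
      exact dif_pos i.2
    · intro ω hω
      rw [DSet, Finset.mem_filter] at hω
      funext i
      by_cases hi : i ∈ I
      · exact dif_pos hi
      · exact (dif_neg hi).trans (hω.2 i hi).symm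
    · intro ω₀ _; rfl

lemma card_FSet_le (K : Finset (Fin n) → ℕ) (S : Finset (↥J → Bool)) (B : ℕ)
    (hB : ∀ I : Finset ↥J, K (mapJ J I) ≤ B) :
    (FSet J K S).card ≤ 4 ^ J.card * B := by
  classical
  calc (FSet J K S).card ≤ ∑ p ∈ ASet J S, ((Finset.range (K (mapJ J p.1))).image
        (fun j => (p, j))).card := Finset.card_biUnion_le
    _ ≤ ∑ p ∈ ASet J S, B := by
        refine Finset.sum_le_sum fun p _ => ?_
        exact (Finset.card_image_le).trans (by simpa using hB p.1)
    _ = (ASet J S).card * B := by rw [Finset.sum_const, smul_eq_mul]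
    _ ≤ 4 ^ J.card * B := by
        refine Nat.mul_le_mul_right _ ?_
        calc (ASet J S).card ≤ Fintype.card (Finset ↥J × (↥J → Bool)) := Finset.card_le_univ _
          _ = 4 ^ J.card := by
              rw [Fintype.card_prod, Fintype.card_finset, Fintype.card_fun]
              simp only [Fintype.card_coe, Fintype.card_bool]
              rw [← Nat.mul_pow]

lemma if_symm_apply {α M : Type*} {t : ℕ} (e : Fin t ≃ α × Bool) (w : Fin t → M) (v : Fin t) :
    (if (e v).2 then w (e.symm ((e v).1, true)) else w (e.symm ((e v).1, false))) = w v := by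
  cases h : (e v).2 with
  | false =>
      rw [if_neg (by simp), show ((e v).1, false) = e v from Prod.ext rfl h.symm,
        Equiv.symm_apply_apply]
  | true =>
      rw [if_pos rfl, show ((e v).1, true) = e v from Prod.ext rfl h.symm,
        Equiv.symm_apply_apply]

lemma expect_xy {α : Type*} [Fintype α] [DecidableEq α] {N t : ℕ} [NeZero N]
    (e : Fin t ≃ α × Bool) (H : (α → ZMod N) → (α → ZMod N) → ℝ) :
    (Finset.expect Finset.univ fun x : α → ZMod N =>
      Finset.expect Finset.univ fun y : α → ZMod N => H x y)
      = Finset.expect Finset.univ fun w : Fin t → ZMod N =>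
          H (fun i => w (e.symm (i, false))) (fun i => w (e.symm (i, true))) := by
  rw [← Finset.expect_product']
  refine Finset.expect_equiv ?_ (fun p => by simp) (fun p _ => ?_)
  · exact {
      toFun := fun p => fun v => if (e v).2 then p.2 (e v).1 else p.1 (e v).1
      invFun := fun w => (fun i => w (e.symm (i, false)), fun i => w (e.symm (i, true)))
      left_inv := by
        intro p
        refine Prod.ext (funext fun i => ?_) (funext fun i => ?_) <;>
          simp [Equiv.apply_symm_apply]
      right_inv := by
        intro w
        funext v
        exact if_symm_apply e w v }
  · show H p.1 p.2 = H _ _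
    congr 1 <;> funext i <;> simp [Equiv.apply_symm_apply]

end GTaux

namespace GTaux

lemma K_le_bound {d L : ℕ} (K : Finset (Fin (d+1)) → ℕ)
    (c : (I : Finset (Fin (d+1))) → ℕ → (I → ℤ))
    (hsys2 : ∀ I : Finset (Fin (d + 1)), I.card ≤ d → ∀ j < K I, ∀ i : I,
      c I j i ≠ 0 ∧ |c I j i| ≤ (L : ℤ))
    (hsys3 : ∀ I I' : Finset (Fin (d + 1)), I.card ≤ d → I'.card ≤ d →
      ∀ j < K I, ∀ j' < K I', (I, j) ≠ (I', j') →
      ¬ ∃ q : ℚ, ∀ i : Fin (d + 1),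
        (extCoeff I (c I j) i : ℚ) = q * (extCoeff I' (c I' j') i : ℚ))
    (I : Finset (Fin (d+1))) (hI : I.card ≤ d) : K I ≤ (2 * L + 1) ^ (d + 1) := by
  classical
  set g : ℕ → (Fin (d+1) → ℤ) := fun j v => extCoeff I (c I j) v with hg
  have hinj : Set.InjOn g (Finset.range (K I)) := by
    intro j hj j' hj' hgj
    by_contra hne
    refine hsys3 I I hI hI j (Finset.mem_range.1 hj) j' (Finset.mem_range.1 hj')
      (by simp [hne]) ⟨1, fun v => ?_⟩
    rw [one_mul]
    exact_mod_cast congrArg (fun f => f v) hgj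
  have hcard : K I = ((Finset.range (K I)).image g).card := by
    rw [Finset.card_image_of_injOn hinj, Finset.card_range]
  rw [hcard]
  have hsub : (Finset.range (K I)).image g ⊆ Fintype.piFinset (fun _ : Fin (d+1) =>
      Finset.Icc (-(L:ℤ)) L) := by
    intro f hf
    rw [Finset.mem_image] at hf
    obtain ⟨j, hj, rfl⟩ := hf
    rw [Fintype.mem_piFinset]
    intro v
    rw [Finset.mem_Icc, hg]
    simp only
    rw [extCoeff]
    by_cases hv : v ∈ I
    · rw [dif_pos hv]
      exact abs_le.1 (hsys2 I hI j (Finset.mem_range.1 hj) ⟨v, hv⟩).2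
    · rw [dif_neg hv]
      constructor <;> simp
  calc ((Finset.range (K I)).image g).card
      ≤ (Fintype.piFinset (fun _ : Fin (d+1) => Finset.Icc (-(L:ℤ)) L)).card :=
        Finset.card_le_card hsub
    _ = (2 * L + 1) ^ (d + 1) := by
        rw [Fintype.card_piFinset, Finset.prod_const, Int.card_Icc, Finset.card_univ,
          Fintype.card_fin]
        congr 1
        omega

lemma nonprop {n : ℕ} (J : Finset (Fin n)) (K : Finset (Fin n) → ℕ)
    (c : (I : Finset (Fin n)) → ℕ → (↥I → ℤ)) (hKempty : K (∅ : Finset (Fin n)) = 0)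
    (hnz : ∀ I : Finset ↥J, ∀ j < K (mapJ J I), ∀ i : ↥(mapJ J I), c (mapJ J I) j i ≠ 0)
    (hnp : ∀ (I : Finset ↥J), ∀ j j', j < K (mapJ J I) → j' < K (mapJ J I) → j ≠ j' →
      ¬ ∃ q : ℚ, ∀ v : Fin n, (extCoeff (mapJ J I) (c (mapJ J I) j) v : ℚ)
        = q * (extCoeff (mapJ J I) (c (mapJ J I) j') v : ℚ))
    (S : Finset (↥J → Bool)) (f f' : (Finset ↥J × (↥J → Bool)) × ℕ)
    (hf : f ∈ FSet J K S) (hf' : f' ∈ FSet J K S) (hff : f ≠ f') (q : ℚ)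
    (hq : ∀ p : ↥J × Bool, (Acoef J c f.1.1 f.1.2 f.2 p : ℚ)
      = q * (Acoef J c f'.1.1 f'.1.2 f'.2 p : ℚ)) : False := by
  classical
  rw [mem_FSet] at hf hf'
  have hj : f.2 < K (mapJ J f.1.1) := Finset.mem_range.1 hf.2
  have hj' : f'.2 < K (mapJ J f'.1.1) := Finset.mem_range.1 hf'.2
  have hne : f.1.1.Nonempty := by
    rw [Finset.nonempty_iff_ne_empty]
    intro h0
    rw [h0, show mapJ J (∅ : Finset ↥J) = ∅ from Finset.map_empty _, hKempty] at hj
    omega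
  have hne' : f'.1.1.Nonempty := by
    rw [Finset.nonempty_iff_ne_empty]
    intro h0
    rw [h0, show mapJ J (∅ : Finset ↥J) = ∅ from Finset.map_empty _, hKempty] at hj'
    omega
  have hAmem : ∀ i : ↥J, i ∈ f.1.1 → Acoef J c f.1.1 f.1.2 f.2 (i, f.1.2 i) ≠ 0 := by
    intro i hi
    rw [Acoef_mem J c _ _ _ i hi]
    exact hnz f.1.1 f.2 hj _
  have hAmem' : ∀ i : ↥J, i ∈ f'.1.1 → Acoef J c f'.1.1 f'.1.2 f'.2 (i, f'.1.2 i) ≠ 0 := by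
    intro i hi
    rw [Acoef_mem J c _ _ _ i hi]
    exact hnz f'.1.1 f'.2 hj' _
  have hq0 : q ≠ 0 := by
    rintro rfl
    obtain ⟨i, hi⟩ := hne
    have h1 := hq (i, f.1.2 i)
    rw [zero_mul] at h1
    exact hAmem i hi (by exact_mod_cast h1)
  have hsub : ∀ i : ↥J, i ∈ f.1.1 → i ∈ f'.1.1 ∧ f'.1.2 i = f.1.2 i := by
    intro i hi
    have h1 := hq (i, f.1.2 i)
    have h3 : Acoef J c f'.1.1 f'.1.2 f'.2 (i, f.1.2 i) ≠ 0 := by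
      intro h
      rw [show ((Acoef J c f'.1.1 f'.1.2 f'.2 (i, f.1.2 i) : ℤ) : ℚ) = 0 from
        by exact_mod_cast h, mul_zero] at h1
      exact hAmem i hi (by exact_mod_cast h1)
    exact Acoef_nonzero J c _ _ _ _ h3
  have hsub' : ∀ i : ↥J, i ∈ f'.1.1 → i ∈ f.1.1 ∧ f.1.2 i = f'.1.2 i := by
    intro i hi
    have h1 := hq (i, f'.1.2 i)
    have h3 : Acoef J c f.1.1 f.1.2 f.2 (i, f'.1.2 i) ≠ 0 := by
      intro h
      rw [show ((Acoef J c f.1.1 f.1.2 f.2 (i, f'.1.2 i) : ℤ) : ℚ) = 0 from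
        by exact_mod_cast h] at h1
      have h4 := (mul_eq_zero.1 h1.symm).resolve_left hq0
      exact hAmem' i hi (by exact_mod_cast h4)
    exact Acoef_nonzero J c _ _ _ _ h3
  have hI : f.1.1 = f'.1.1 :=
    Finset.ext fun i => ⟨fun h => (hsub i h).1, fun h => (hsub' i h).1⟩
  have hω : f.1.2 = f'.1.2 := by
    funext i
    by_cases hi : i ∈ f.1.1
    · exact ((hsub i hi).2).symm
    · rcases (mem_ASet J S _).1 hf.1 with ⟨hu, _⟩ | ⟨_, hn1⟩
      · exact absurd (hu ▸ Finset.mem_univ i) hi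
      · rcases (mem_ASet J S _).1 hf'.1 with ⟨hu2, _⟩ | ⟨_, hn2⟩
        · exact absurd (by rw [hI, hu2]; exact Finset.mem_univ i) hi
        · rw [hn1 i hi, hn2 i (by rw [← hI]; exact hi)]
  have hjj : f.2 ≠ f'.2 := by
    intro h
    exact hff (Prod.ext (Prod.ext hI hω) h)
  rw [← hI, ← hω] at hq
  rw [← hI] at hj'
  refine hnp f.1.1 f.2 f'.2 hj hj' hjj ⟨q, fun v => ?_⟩
  by_cases hv : v ∈ mapJ J f.1.1
  · set i : ↥J := ⟨v, Finset.property_of_mem_map_subtype f.1.1 hv⟩ with hidef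
    have hi : i ∈ f.1.1 := (mem_mapJ J f.1.1 i).1 hv
    have h1 := hq (i, f.1.2 i)
    rw [Acoef_mem J c _ _ _ i hi, Acoef_mem J c _ _ _ i hi] at h1
    rw [show v = i.1 from rfl, extCoeff, dif_pos ((mem_mapJ J f.1.1 i).2 hi),
      extCoeff, dif_pos ((mem_mapJ J f.1.1 i).2 hi)]
    exact h1
  · rw [extCoeff, dif_neg hv, extCoeff, dif_neg hv]
    simp


section Forms
variable {d N : ℕ} (ν : ZMod N → ℝ)
  (νI : (I : Finset (Fin (d+1))) → (I → ZMod N) → ℝ)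
  (K : Finset (Fin (d+1)) → ℕ)
  (c : (I : Finset (Fin (d+1))) → ℕ → (I → ℤ))
  (b : Finset (Fin (d+1)) → ℕ → ZMod N)

lemma Ltop (J : Finset (Fin (d+1))) (hJ : J.card ≤ d)
    (hsys1 : ∀ I : Finset (Fin (d + 1)), I.card ≤ d →
      νI I = fun x => ∏ j ∈ Finset.range (K I),
        ν ((∑ i : I, (c I j i : ZMod N) * x i) + b I j))
    (ω : ↥J → Bool) (x y : ↥J → ZMod N) :
    νI J (proj ω x y) = ∏ j ∈ Finset.range (K J),
      ν ((∑ p : ↥J × Bool, (Acoef J c univ ω j p : ZMod N) *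
            (if p.2 then y p.1 else x p.1)) + b J j) := by
  rw [congrFun (hsys1 J hJ) (proj ω x y)]
  refine Finset.prod_congr rfl fun j _ => ?_
  have hsum : (∑ p : ↥J × Bool, (Acoef J c univ ω j p : ZMod N) *
      (if p.2 then y p.1 else x p.1)) = ∑ i : ↥J, (c J j i : ZMod N) * proj ω x y i := by
    rw [sumA, mapJ_univ]
    exact Finset.sum_congr rfl fun i _ => by rw [extCoeff, dif_pos i.2]; rfl
  rw [hsum]

lemma Lprop (J : Finset (Fin (d+1))) (I : Finset ↥J) (hI : (mapJ J I).card ≤ d)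
    (hsys1 : ∀ I : Finset (Fin (d + 1)), I.card ≤ d →
      νI I = fun x => ∏ j ∈ Finset.range (K I),
        ν ((∑ i : I, (c I j i : ZMod N) * x i) + b I j))
    (ω₀ : ↥I → Bool) (x y : ↥J → ZMod N) :
    restrictWeights νI J I (projI ω₀ x y) = ∏ j ∈ Finset.range (K (mapJ J I)),
      ν ((∑ p : ↥J × Bool, (Acoef J c I (extB J I ω₀) j p : ZMod N) *
            (if p.2 then y p.1 else x p.1)) + b (mapJ J I) j) := by
  show νI (mapJ J I) _ = _
  refine (congrFun (hsys1 (mapJ J I) hI) _).trans ?_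
  beta_reduce
  refine Finset.prod_congr rfl fun j _ => ?_
  have hsum : (∑ p : ↥J × Bool, (Acoef J c I (extB J I ω₀) j p : ZMod N) *
      (if p.2 then y p.1 else x p.1))
      = ∑ i ∈ I, (extCoeff (mapJ J I) (c (mapJ J I) j) i.1 : ZMod N) *
          (if extB J I ω₀ i then y i else x i) := sumA J c I (extB J I ω₀) j x y
  rw [hsum]
  congr 2
  refine Finset.sum_bij (fun (i : ↥(mapJ J I)) _ =>
    (⟨i.1, Finset.property_of_mem_map_subtype I i.2⟩ : ↥J)) ?_ ?_ ?_ ?_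
  · intro a _
    exact (mem_mapJ J I _).1 a.2
  · intro a₁ _ a₂ _ h
    have := congrArg Subtype.val h
    exact Subtype.ext this
  · intro i hi
    exact ⟨⟨i.1, (mem_mapJ J I i).2 hi⟩, Finset.mem_univ _, rfl⟩
  · intro a _
    rw [extCoeff, dif_pos a.2, extB]
    have hmem : (⟨a.1, Finset.property_of_mem_map_subtype I a.2⟩ : ↥J) ∈ I :=
      (mem_mapJ J I _).1 a.2
    rw [dif_pos hmem]
    rfl

end Forms

lemma FSet_fst_nonempty {n : ℕ} (J : Finset (Fin n)) (K : Finset (Fin n) → ℕ)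
    (hKempty : K (∅ : Finset (Fin n)) = 0) (S : Finset (↥J → Bool))
    (f : (Finset ↥J × (↥J → Bool)) × ℕ) (hf : f ∈ FSet J K S) : f.1.1.Nonempty := by
  rw [mem_FSet] at hf
  rw [Finset.nonempty_iff_ne_empty]
  intro h0
  have hj := Finset.mem_range.1 hf.2
  rw [h0, show mapJ J (∅ : Finset ↥J) = ∅ from Finset.map_empty _, hKempty] at hj
  omega

end GTaux

open GTaux in
/-- The weight `ν_J` is close to `1` in the weighted box norm. -/
theorem weight_minus_one_box_norm_small (d L : ℕ) (hd : 1 ≤ d) (hL : 1 ≤ L) :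
    ∃ m₀ t₀ : ℕ, ∀ η : ℝ, 0 < η → ∃ ε : ℝ, 0 < ε ∧ ∃ N₀ : ℕ,
      ∀ (N : ℕ) [NeZero N], N₀ ≤ N →
      ∀ ν : ZMod N → ℝ, (∀ z, 0 ≤ ν z) → LinearFormsCondition N ν m₀ t₀ L ε →
      ∀ νI : (I : Finset (Fin (d + 1))) → (I → ZMod N) → ℝ,
        IsIndepWeightSystem d L ν νI →
      ∀ J : Finset (Fin (d + 1)), J.card = d →
        boxNorm (restrictWeights νI J) (fun x => νI J x - 1) ≤ η := by
  classical
  refine ⟨4 ^ d * (2 * L + 1) ^ (d + 1), 2 * d, fun η hη => ?_⟩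
  refine ⟨η ^ 2 ^ d / 2 ^ 2 ^ d, by positivity, 1, ?_⟩
  intro N instN _hN ν _hν hLFC νI hsys J hJ
  obtain ⟨K, c, b, hsys1, hsys2, hsys3⟩ := hsys
  have hJne : J.Nonempty := Finset.card_pos.mp (by rw [hJ]; omega)
  haveI : Nonempty ↥J := Finset.nonempty_coe_sort.2 hJne
  have hcard : Fintype.card ↥J = d := by rw [Fintype.card_coe, hJ]
  by_cases hKJ : K J = 0
  · -- trivial case : `νI J ≡ 1`
    have hνJ : νI J = fun _ => (1:ℝ) := by
      rw [hsys1 J hJ.le, hKJ]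
      funext z; simp
    have hzero : gowersInner (restrictWeights νI J) (fun _ => fun x => νI J x - 1) = 0 := by
      rw [gowersInner]
      have hpt : ∀ x y : ↥J → ZMod N,
          (∏ ω : ↥J → Bool, ((fun _ => fun x => νI J x - 1) ω (proj ω x y))) *
            weightProd (restrictWeights νI J) x y = 0 := by
        intro x y
        have : (∏ ω : ↥J → Bool, ((fun _ => fun x => νI J x - 1) ω (proj ω x y))) = 0 := by
          rw [hνJ]
          simp
        rw [this, zero_mul]
      calc (Finset.expect Finset.univ fun x : ↥J → ZMod N =>
            Finset.expect Finset.univ fun y : ↥J → ZMod N =>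
              (∏ ω : ↥J → Bool, ((fun _ => fun x => νI J x - 1) ω (proj ω x y))) *
                weightProd (restrictWeights νI J) x y)
          = Finset.expect Finset.univ fun _ : ↥J → ZMod N =>
              Finset.expect Finset.univ fun _ : ↥J → ZMod N => (0:ℝ) :=
            Finset.expect_congr rfl fun x _ => Finset.expect_congr rfl fun y _ => hpt x y
        _ = 0 := by simp
    rw [boxNorm, hzero, Real.zero_rpow (by positivity)]
    exact hη.le
  · -- main case
    have hKempty : K (∅ : Finset (Fin (d+1))) = 0 := by
      by_contra h0
      refine hsys3 ∅ J (by simp) hJ.le 0 (Nat.pos_of_ne_zero h0) 0 (Nat.pos_of_ne_zero hKJ)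
        (fun hcon => hJne.ne_empty (congrArg Prod.fst hcon).symm) ⟨0, fun v => ?_⟩
      rw [zero_mul]
      simp [extCoeff]
    have hcardm : ∀ I₀ : Finset ↥J, (mapJ J I₀).card ≤ d := by
      intro I₀
      rw [show (mapJ J I₀).card = I₀.card from Finset.card_map _]
      calc I₀.card ≤ (univ : Finset ↥J).card := Finset.card_le_card (Finset.subset_univ _)
        _ = d := by rw [Finset.card_univ, hcard]
    have hKB : ∀ I₀ : Finset ↥J, K (mapJ J I₀) ≤ (2*L+1)^(d+1) := fun I₀ =>
      K_le_bound K c hsys2 hsys3 _ (hcardm I₀)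
    have hce : Fintype.card (↥J × Bool) = 2 * d := by
      rw [Fintype.card_prod, Fintype.card_bool, hcard]; ring
    set e : Fin (2*d) ≃ ↥J × Bool := (Fintype.equivFinOfCardEq hce).symm with he
    set T : Finset (↥J → Bool) → ℝ := fun S =>
      Finset.expect Finset.univ fun x : ↥J → ZMod N =>
        Finset.expect Finset.univ fun y : ↥J → ZMod N =>
          (∏ ω ∈ S, νI J (proj ω x y)) * weightProd (restrictWeights νI J) x y with hT
    set TT : Finset (↥J → Bool) → ℝ := fun S =>
      Finset.expect Finset.univ fun w : Fin (2*d) → ZMod N =>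
        ∏ f ∈ FSet J K S, ν ((∑ v : Fin (2*d),
          (Acoef J c f.1.1 f.1.2 f.2 (e v) : ZMod N) * w v) + b (mapJ J f.1.1) f.2) with hTT
    have conv : ∀ S : Finset (↥J → Bool), T S = TT S := by
      intro S
      have step1 : ∀ x y : ↥J → ZMod N,
          (∏ ω ∈ S, νI J (proj ω x y)) * weightProd (restrictWeights νI J) x y
          = ∏ f ∈ FSet J K S, ν ((∑ p : ↥J × Bool,
              (Acoef J c f.1.1 f.1.2 f.2 p : ZMod N) *
              (if p.2 then y p.1 else x p.1)) + b (mapJ J f.1.1) f.2) := by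
        intro x y
        rw [prod_FSet J K S (fun pr j => ν ((∑ p : ↥J × Bool,
          (Acoef J c pr.1 pr.2 j p : ZMod N) *
          (if p.2 then y p.1 else x p.1)) + b (mapJ J pr.1) j))]
        congr 1
        · refine Finset.prod_congr rfl fun ω _ => ?_
          rw [Ltop ν νI K c b J hJ.le hsys1 ω x y]
          exact Finset.prod_congr rfl fun j _ => by rw [mapJ_univ]
        · rw [weightProd]
          refine Finset.prod_congr rfl fun I _ => Finset.prod_congr rfl fun ω₀ _ => ?_
          exact Lprop ν νI K c b J I (hcardm I) hsys1 ω₀ x y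
      calc T S = Finset.expect Finset.univ fun x : ↥J → ZMod N =>
            Finset.expect Finset.univ fun y : ↥J → ZMod N =>
              ∏ f ∈ FSet J K S, ν ((∑ p : ↥J × Bool,
                (Acoef J c f.1.1 f.1.2 f.2 p : ZMod N) *
                (if p.2 then y p.1 else x p.1)) + b (mapJ J f.1.1) f.2) := by
            rw [hT]
            exact Finset.expect_congr rfl fun x _ =>
              Finset.expect_congr rfl fun y _ => step1 x y
        _ = TT S := by
            rw [expect_xy e (fun x y => ∏ f ∈ FSet J K S, ν ((∑ p : ↥J × Bool,
              (Acoef J c f.1.1 f.1.2 f.2 p : ZMod N) *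
              (if p.2 then y p.1 else x p.1)) + b (mapJ J f.1.1) f.2)), hTT]
            refine Finset.expect_congr rfl fun w _ => Finset.prod_congr rfl fun f _ => ?_
            have hsum : (∑ p : ↥J × Bool, (Acoef J c f.1.1 f.1.2 f.2 p : ZMod N) *
                (if p.2 then w (e.symm (p.1, true)) else w (e.symm (p.1, false))))
                = ∑ v : Fin (2*d), (Acoef J c f.1.1 f.1.2 f.2 (e v) : ZMod N) * w v := by
              rw [← Equiv.sum_comp e (fun p : ↥J × Bool =>
                (Acoef J c f.1.1 f.1.2 f.2 p : ZMod N) *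
                (if p.2 then w (e.symm (p.1, true)) else w (e.symm (p.1, false))))]
              exact Fintype.sum_congr _ _ fun v => by rw [if_symm_apply e w v]
            exact congrArg ν (congrArg (· + b (mapJ J f.1.1) f.2) hsum)
    have hcount : ∀ S : Finset (↥J → Bool),
        (FSet J K S).card ≤ 4 ^ d * (2*L+1)^(d+1) := by
      intro S
      have h := card_FSet_le J K S ((2*L+1)^(d+1)) hKB
      rwa [hJ] at h
    have key : ∀ S : Finset (↥J → Bool), |T S - 1| ≤ η ^ 2 ^ d / 2 ^ 2 ^ d := by
      intro S
      rw [conv S]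
      rcases Nat.eq_zero_or_pos (FSet J K S).card with h0 | hpos
      · rw [Finset.card_eq_zero] at h0
        rw [hTT]
        simp only [h0, Finset.prod_empty]
        rw [Finset.expect_const Finset.univ_nonempty, sub_self, abs_zero]
        positivity
      · set m := (FSet J K S).card with hm
        set eqF : ↥(FSet J K S) ≃ Fin m := (FSet J K S).equivFin with heqF
        set F : Fin m → (Finset ↥J × (↥J → Bool)) × ℕ :=
          fun i => ((eqF.symm i : ↥(FSet J K S)) : (Finset ↥J × (↥J → Bool)) × ℕ) with hF
        have hFmem : ∀ i, F i ∈ FSet J K S := fun i => (eqF.symm i).2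
        have hFj : ∀ i, (F i).2 < K (mapJ J (F i).1.1) := fun i =>
          Finset.mem_range.1 ((mem_FSet J K S (F i)).1 (hFmem i)).2
        set a : Fin m → Fin (2*d) → ℤ :=
          fun i v => Acoef J c (F i).1.1 (F i).1.2 (F i).2 (e v) with ha
        set bb : Fin m → ZMod N := fun i => b (mapJ J (F i).1.1) (F i).2 with hbb
        have hTTeq : TT S = Finset.expect Finset.univ fun w : Fin (2*d) → ZMod N =>
            ∏ i, ν ((∑ v, (a i v : ZMod N) * w v) + bb i) := by
          rw [hTT]
          refine Finset.expect_congr rfl fun w _ => ?_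
          rw [← Finset.prod_coe_sort (FSet J K S) (fun f => ν ((∑ v : Fin (2*d),
            (Acoef J c f.1.1 f.1.2 f.2 (e v) : ZMod N) * w v) + b (mapJ J f.1.1) f.2))]
          exact (Fintype.prod_equiv eqF.symm _ _ fun i => rfl).symm
        have hnz : ∀ i, a i ≠ 0 := by
          intro i hzero
          obtain ⟨i₀, hi₀⟩ := FSet_fst_nonempty J K hKempty S (F i) (hFmem i)
          have h1 := congrFun hzero (e.symm (i₀, (F i).1.2 i₀))
          rw [ha] at h1
          simp only [Pi.zero_apply, Equiv.apply_symm_apply] at h1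
          rw [Acoef_mem J c _ _ _ i₀ hi₀] at h1
          exact (hsys2 (mapJ J (F i).1.1) (hcardm _) (F i).2 (hFj i) _).1 h1
        have hbd : ∀ i v, |a i v| ≤ (L : ℤ) := by
          intro i v
          rw [ha]
          simp only
          rw [Acoef]
          split
          · rw [extCoeff]
            split
            · exact (hsys2 (mapJ J (F i).1.1) (hcardm _) (F i).2 (hFj i) _).2
            · simp
          · simp
        have hnp : ∀ i i', i ≠ i' →
            ¬ ∃ q : ℚ, ∀ v, (a i v : ℚ) = q * (a i' v : ℚ) := by
          intro i i' hii
          rintro ⟨q, hqv⟩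
          have hFne : F i ≠ F i' := by
            intro h
            exact hii (eqF.symm.injective (Subtype.ext h))
          refine nonprop J K c hKempty
            (fun I₀ j hj i₁ => (hsys2 (mapJ J I₀) (hcardm I₀) j hj i₁).1)
            (fun I₀ j j' hjk hj'k hjj => hsys3 (mapJ J I₀) (mapJ J I₀) (hcardm I₀)
              (hcardm I₀) j hjk j' hj'k (fun hcon => hjj (Prod.ext_iff.1 hcon).2))
            S (F i) (F i') (hFmem i) (hFmem i') hFne q (fun p => ?_)
          have h1 := hqv (e.symm p)
          rw [ha] at h1
          simpa only [Equiv.apply_symm_apply] using h1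
        have hLF := hLFC m (2*d) hpos (by rw [hm]; exact hcount S) (by omega) le_rfl
          a bb hnz hbd hnp
        rw [hTTeq]
        exact hLF
    have expand : gowersInner (restrictWeights νI J) (fun _ => fun x => νI J x - 1)
        = ∑ S : Finset (↥J → Bool), (-1:ℝ) ^ (Sᶜ.card) * T S := by
      rw [gowersInner]
      have h1 : ∀ x y : ↥J → ZMod N,
          (∏ ω : ↥J → Bool, (νI J (proj ω x y) - 1)) *
            weightProd (restrictWeights νI J) x y
          = ∑ S : Finset (↥J → Bool), (-1:ℝ) ^ (Sᶜ.card) *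
              ((∏ ω ∈ S, νI J (proj ω x y)) * weightProd (restrictWeights νI J) x y) := by
        intro x y
        have h2 : (∏ ω : ↥J → Bool, (νI J (proj ω x y) - 1))
            = ∑ S : Finset (↥J → Bool),
                (∏ ω ∈ S, νI J (proj ω x y)) * (-1:ℝ)^(Sᶜ.card) := by
          simp only [sub_eq_add_neg]
          rw [Fintype.prod_add]
          exact Finset.sum_congr rfl fun S _ => by rw [Finset.prod_const]
        rw [h2, Finset.sum_mul]
        exact Finset.sum_congr rfl fun S _ => by ring
      calc (Finset.expect Finset.univ fun x : ↥J → ZMod N =>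
            Finset.expect Finset.univ fun y : ↥J → ZMod N =>
              (∏ ω : ↥J → Bool, ((fun _ => fun z => νI J z - 1) ω (proj ω x y))) *
                weightProd (restrictWeights νI J) x y)
          = Finset.expect Finset.univ fun x : ↥J → ZMod N =>
              Finset.expect Finset.univ fun y : ↥J → ZMod N =>
                ∑ S : Finset (↥J → Bool), (-1:ℝ) ^ (Sᶜ.card) *
                  ((∏ ω ∈ S, νI J (proj ω x y)) *
                    weightProd (restrictWeights νI J) x y) :=
            Finset.expect_congr rfl fun x _ =>
              Finset.expect_congr rfl fun y _ => h1 x y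
        _ = Finset.expect Finset.univ fun x : ↥J → ZMod N =>
              ∑ S : Finset (↥J → Bool), (-1:ℝ) ^ (Sᶜ.card) *
                Finset.expect Finset.univ (fun y : ↥J → ZMod N =>
                  (∏ ω ∈ S, νI J (proj ω x y)) *
                    weightProd (restrictWeights νI J) x y) := by
            refine Finset.expect_congr rfl fun x _ => ?_
            rw [Finset.expect_sum_comm]
            exact Finset.sum_congr rfl fun S _ => (Finset.mul_expect _ _ _).symm
        _ = ∑ S : Finset (↥J → Bool), (-1:ℝ) ^ (Sᶜ.card) * T S := by
            rw [Finset.expect_sum_comm]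
            exact Finset.sum_congr rfl fun S _ => by
              rw [← Finset.mul_expect, hT]
    have hsign : (∑ S : Finset (↥J → Bool), (-1:ℝ)^(Sᶜ.card)) = 0 := sum_sign_compl
    have habs : |gowersInner (restrictWeights νI J) (fun _ => fun x => νI J x - 1)|
        ≤ η ^ 2 ^ d := by
      have hg2 : gowersInner (restrictWeights νI J) (fun _ => fun x => νI J x - 1)
          = ∑ S : Finset (↥J → Bool), (-1:ℝ)^(Sᶜ.card) * (T S - 1) := by
        rw [expand]
        rw [show (∑ S : Finset (↥J → Bool), (-1:ℝ)^(Sᶜ.card) * (T S - 1))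
            = (∑ S : Finset (↥J → Bool), (-1:ℝ)^(Sᶜ.card) * T S)
              - ∑ S : Finset (↥J → Bool), (-1:ℝ)^(Sᶜ.card) from by
          rw [← Finset.sum_sub_distrib]
          exact Finset.sum_congr rfl fun S _ => by ring]
        rw [hsign, sub_zero]
      rw [hg2]
      calc |∑ S : Finset (↥J → Bool), (-1:ℝ)^(Sᶜ.card) * (T S - 1)|
          ≤ ∑ S : Finset (↥J → Bool), |(-1:ℝ)^(Sᶜ.card) * (T S - 1)| :=
            Finset.abs_sum_le_sum_abs _ _
        _ = ∑ S : Finset (↥J → Bool), |T S - 1| := by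
            refine Finset.sum_congr rfl fun S _ => ?_
            rw [abs_mul, abs_pow, abs_neg, abs_one, one_pow, one_mul]
        _ ≤ ∑ _S : Finset (↥J → Bool), (η ^ 2 ^ d / 2 ^ 2 ^ d) :=
            Finset.sum_le_sum fun S _ => key S
        _ = (Fintype.card (Finset (↥J → Bool)) : ℝ) * (η ^ 2 ^ d / 2 ^ 2 ^ d) := by
            rw [Finset.sum_const, nsmul_eq_mul, Finset.card_univ]
        _ = η ^ 2 ^ d := by
            rw [Fintype.card_finset, Fintype.card_fun, Fintype.card_bool, hcard]
            push_cast
            rw [mul_comm, div_mul_cancel₀]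
            positivity
    rw [boxNorm, hcard]
    exact rpow_aux hη.le habs

end
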